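/- For r ≥ 1 and 0 ≤ k ≤ n-1, the sum ∑_{j=0}^{n-k-1} (-1)^j C(k+1, r-j) C(k+j, j) equals (-1)^{n-k+1} ((n-k)/r) C(n,k) C(k, r-n+k). -/

import Mathlib

open Finset

/-- Binomial coefficient `C(a, b)` with an integer lower index, zero when `b < 0`. -/
def ichoose (a : ℕ) (b : ℤ) : ℕ := if 0 ≤ b then a.choose b.toNat else 0

lemma ichoose_natCast (a t : ℕ) : ichoose a (t : ℤ) = a.choose t := by
  unfold ichoose
  rw [if_pos (Int.natCast_nonneg t)]
  simp

lemma nat_l1 (k t : ℕ) : ((t : ℚ) + 1) * k.choose (t + 1) = ((k : ℚ) - t) * k.choose t := by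
  rcases le_or_gt (t + 1) k with h | h
  · have h' : k.choose (t + 1) * (t + 1) = k.choose t * (k - t) := Nat.choose_succ_right_eq k t
    have h'' : ((k.choose (t+1) * (t+1) : ℕ) : ℚ) = ((k.choose t * (k - t) : ℕ) : ℚ) := by
      rw [h']
    push_cast [Nat.cast_sub (by omega : t ≤ k)] at h''
    linarith
  · rcases le_or_gt t k with h2 | h2
    · have : t = k := by omega
      subst this
      simp [Nat.choose_eq_zero_of_lt]
    · simp [Nat.choose_eq_zero_of_lt, h, h2]

lemma ichoose_l1 (k : ℕ) (s : ℤ) :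
    (s : ℚ) * (ichoose k s : ℚ) = ((k : ℚ) - s + 1) * (ichoose k (s - 1) : ℚ) := by
  rcases lt_trichotomy s 0 with h | h | h
  · have h1 : ¬ (0 ≤ s) := by omega
    have h2 : ¬ (0 ≤ s - 1) := by omega
    simp [ichoose, h1, h2, show ¬ (1 ≤ s) by omega]
  · subst h; simp [ichoose]
  · obtain ⟨t, rfl⟩ : ∃ t : ℕ, s = (t : ℤ) + 1 := ⟨(s - 1).toNat, by omega⟩
    have e1 : ((t : ℤ) + 1) = ((t + 1 : ℕ) : ℤ) := by push_cast; ring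
    have e2 : ((t : ℤ) + 1 - 1) = ((t : ℕ) : ℤ) := by push_cast; ring
    rw [e2, ichoose_natCast, e1, ichoose_natCast]
    have := nat_l1 k t
    push_cast
    push_cast at this
    linarith

lemma ichoose_pascal (k : ℕ) (s : ℤ) :
    (ichoose (k + 1) s : ℚ) = (ichoose k s : ℚ) + (ichoose k (s - 1) : ℚ) := by
  rcases lt_trichotomy s 0 with h | h | h
  · have h1 : ¬ (0 ≤ s) := by omega
    have h2 : ¬ (0 ≤ s - 1) := by omega
    simp [ichoose, h1, h2, show ¬ (1 ≤ s) by omega]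
  · subst h; simp [ichoose]
  · obtain ⟨t, rfl⟩ : ∃ t : ℕ, s = (t : ℤ) + 1 := ⟨(s - 1).toNat, by omega⟩
    have e1 : ((t : ℤ) + 1) = ((t + 1 : ℕ) : ℤ) := by push_cast; ring
    have e2 : ((t : ℤ) + 1 - 1) = ((t : ℕ) : ℤ) := by push_cast; ring
    rw [e2, ichoose_natCast, e1, ichoose_natCast, ichoose_natCast]
    rw [Nat.choose_succ_succ]
    push_cast
    ring

lemma aux (k r : ℕ) (hr : 1 ≤ r) (m : ℕ) (hm : 1 ≤ m) :
    ∑ j ∈ Finset.range m,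
        ((-1 : ℚ)) ^ j * (ichoose (k + 1) ((r : ℤ) - j) : ℚ) * ((k + j).choose j : ℚ)
      = (-1 : ℚ) ^ (m + 1) * (m : ℚ) / (r : ℚ) * ((k + m).choose k : ℚ) *
          (ichoose k ((r : ℤ) - m) : ℚ) := by
  have hr0 : (r : ℚ) ≠ 0 := by positivity
  induction m, hm using Nat.le_induction with
  | base =>
    simp only [Finset.sum_range_one]
    obtain ⟨t, rfl⟩ : ∃ t : ℕ, r = t + 1 := ⟨r - 1, by omega⟩
    have e1 : (((t + 1 : ℕ)) : ℤ) - ((0 : ℕ) : ℤ) = ((t + 1 : ℕ) : ℤ) := by push_cast; ring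
    have e2 : (((t + 1 : ℕ)) : ℤ) - ((1 : ℕ) : ℤ) = ((t : ℕ) : ℤ) := by push_cast; ring
    rw [e1, ichoose_natCast, e2, ichoose_natCast]
    have h3 : (k + 1) * k.choose t = (k+1).choose (t+1) * (t+1) := Nat.add_one_mul_choose_eq k t
    have h3q : ((k : ℚ) + 1) * k.choose t = ((k+1).choose (t+1) : ℚ) * ((t:ℚ)+1) := by
      exact_mod_cast congrArg (Nat.cast : ℕ → ℚ) h3
    have hsym : (k + 1).choose k = k + 1 := Nat.choose_succ_self_right k
    field_simp
    norm_num [hsym]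
    linarith
  | succ m hm ih =>
    rw [Finset.sum_range_succ, ih]
    have hs : ((r : ℤ) - ((m : ℕ) + 1 : ℕ)) = ((r : ℤ) - m) - 1 := by push_cast; ring
    rw [hs]
    have h1 := ichoose_l1 k ((r : ℤ) - m)
    have h2 := ichoose_pascal k ((r : ℤ) - m)
    have h3 : ((k + m).choose m : ℚ) = ((k + m).choose k : ℚ) := by
      norm_cast
      rw [← Nat.choose_symm (by omega : m ≤ k + m)]
      congr 1; omega
    have h4 : ((m : ℚ) + 1) * ((k + (m+1)).choose k : ℚ)
        = ((k : ℚ) + m + 1) * ((k + m).choose k : ℚ) := by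
      have hn1 : (k + m + 1) * (k + m).choose m = (k + m + 1).choose (m + 1) * (m + 1) :=
        Nat.add_one_mul_choose_eq (k + m) m
      have hsym : (k + m + 1).choose (m + 1) = (k + m + 1).choose k := by
        rw [← Nat.choose_symm (by omega : m + 1 ≤ k + m + 1)]
        congr 1; omega
      have hsym2 : (k + m).choose m = (k + m).choose k := by
        rw [← Nat.choose_symm (by omega : m ≤ k + m)]
        congr 1; omega
      rw [hsym, hsym2] at hn1
      have hq : ((k:ℚ) + m + 1) * ((k + m).choose k : ℚ)
          = ((k + m + 1).choose k : ℚ) * ((m:ℚ) + 1) := by exact_mod_cast hn1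
      have he : (k + (m+1)) = (k + m + 1) := by ring
      rw [he]
      linarith
    push_cast at h1
    have hsgn1 : (-1 : ℚ) ^ (m + 1) = (-1 : ℚ) ^ m * (-1) := by ring
    have hsgn2 : (-1 : ℚ) ^ (m + 1 + 1) = (-1 : ℚ) ^ m := by
      rw [pow_add]; ring
    rw [hsgn1, hsgn2]
    field_simp
    push_cast
    linear_combination (((k+m).choose k : ℚ)) * h1
      + ((r : ℚ) * ((k+m).choose k : ℚ)) * h2
      + ((r : ℚ) * (ichoose (k+1) ((r:ℤ) - m) : ℚ)) * h3
      - ((ichoose k ((r:ℤ) - m - 1) : ℚ)) * h4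

theorem stmt_7 (n k r : ℕ) (hn : 1 ≤ n) (hk : k ≤ n - 1) (hr : 1 ≤ r) :
    ∑ j ∈ Finset.range (n - k),
        ((-1 : ℚ)) ^ j * (ichoose (k + 1) ((r : ℤ) - j) : ℚ) * ((k + j).choose j : ℚ)
      = (-1 : ℚ) ^ (n - k + 1) * ((n - k : ℕ) : ℚ) / (r : ℚ) * (n.choose k : ℚ) *
          (ichoose k ((r : ℤ) - n + k) : ℚ) := by
  obtain ⟨m, hm, rfl⟩ : ∃ m, 1 ≤ m ∧ n = k + m := ⟨n - k, by omega, by omega⟩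
  have h1 : k + m - k = m := by omega
  have h2 : ((r : ℤ) - (k + m : ℕ) + k) = (r : ℤ) - m := by push_cast; ring
  rw [h1, h2]
  exact aux k r hr m hm
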